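/- Let C be a category with a faithful functor Q : C → Set represented by an object A₀, and suppose C has a right (or left) indicator A⁰. If Φ is an automorphism of C that fixes the objects A₀ and A⁰ and induces the identity map on Hom(A₀, A⁰), then Φ is an inner automorphism of C. -/

import Mathlib

open CategoryTheory

/-- Let `C` be a category with a faithful functor `Q : C ⥤ Type`
represented by an object `A₀` (via `x₀`), and suppose `C` has a right (or left)
indicator `A⁰`.  If `Φ` is an automorphism of `C` that fixes the objects `A₀` and `A⁰`
and induces the identity map on `Hom(A₀, A⁰)`, then `Φ` is an inner automorphism. -/
theorem stmt12 {C : Type u} [Category.{v} C] (Q : C ⥤ Type w) [Q.Faithful]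
    (A₀ : C) (x₀ : Q.obj A₀)
    (hrep : ∀ (A : C) (a : Q.obj A), ∃! α : A₀ ⟶ A, Q.map α x₀ = a)
    (Atop : C)
    (hind :
      (∀ (A B : C) (s : Q.obj A ≃ Q.obj B),
        (∀ ν : B ⟶ Atop, ∃ μ : A ⟶ Atop, Q.map μ = Q.map ν ∘ ⇑s) →
        ∃ γ : A ≅ B, Q.map γ.hom = ⇑s) ∨
      (∀ (A B : C) (s : Q.obj A ≃ Q.obj B),
        (∀ ν : Atop ⟶ A, ∃ μ : Atop ⟶ B, Q.map μ = ⇑s ∘ Q.map ν) →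
        ∃ γ : A ≅ B, Q.map γ.hom = ⇑s))
    (Φ Φinv : C ⥤ C) (hΦ1 : Φ ⋙ Φinv = 𝟭 C) (hΦ2 : Φinv ⋙ Φ = 𝟭 C)
    (h₀ : Φ.obj A₀ = A₀) (htop : Φ.obj Atop = Atop)
    (hHom : ∀ ν : A₀ ⟶ Atop, eqToHom h₀.symm ≫ Φ.map ν ≫ eqToHom htop = ν) :
    Nonempty (𝟭 C ≅ Φ) := by
  choose rep hrep1 hrep2 using hrep
  -- object-level equalities
  have hobj : ∀ A : C, Φinv.obj (Φ.obj A) = A := fun A =>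
    congrArg (fun F : C ⥤ C => F.obj A) hΦ1
  have h₀' : Φinv.obj A₀ = A₀ := (congrArg Φinv.obj h₀).symm.trans (hobj A₀)
  have htop' : Φinv.obj Atop = Atop := (congrArg Φinv.obj htop).symm.trans (hobj Atop)
  have repQ : ∀ (A : C) (α : A₀ ⟶ A), rep A (Q.map α x₀) = α :=
    fun A α => (hrep2 A _ α rfl).symm
  -- the candidate bijection
  have key : ∀ (A : C) (b : Q.obj (Φ.obj A)),
      Q.map (eqToHom h₀.symm ≫ Φ.map (eqToHom h₀'.symm ≫ Φinv.map (rep (Φ.obj A) b)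
        ≫ eqToHom (hobj A))) x₀ = b := by
    intro A b
    have h2 := Functor.congr_hom hΦ2 (rep (Φ.obj A) b)
    simp only [Functor.comp_map, Functor.id_map] at h2
    conv_rhs => rw [← hrep1 (Φ.obj A) b]
    simp [Functor.map_comp, eqToHom_map, h2]
  let s : ∀ A : C, Q.obj A ≃ Q.obj (Φ.obj A) := fun A =>
    { toFun := fun a => Q.map (eqToHom h₀.symm ≫ Φ.map (rep A a)) x₀
      invFun := fun b => Q.map (eqToHom h₀'.symm ≫ Φinv.map (rep (Φ.obj A) b)
        ≫ eqToHom (hobj A)) x₀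
      left_inv := by
        intro a
        dsimp only
        rw [repQ]
        have := Functor.congr_hom hΦ1 (rep A a)
        simp only [Functor.comp_map, Functor.id_map] at this
        simp [Functor.map_comp, eqToHom_map, this, hrep1]
      right_inv := by
        intro b
        dsimp only
        rw [repQ]
        exact key A b }
  have hs : ∀ (A : C) (a : Q.obj A),
      s A a = Q.map (eqToHom h₀.symm ≫ Φ.map (rep A a)) x₀ := fun A a => rfl
  -- naturality of s
  have snat : ∀ {A B : C} (f : A ⟶ B) (a : Q.obj A),
      s B (Q.map f a) = Q.map (Φ.map f) (s A a) := by
    intro A B f a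
    have ha : Q.map f a = Q.map (rep A a ≫ f) x₀ := by
      simp [hrep1]
    rw [hs, hs, ha, repQ]
    simp [Functor.map_comp]
  -- existence of the component isos
  have hiso : ∀ A : C, ∃ γ : A ≅ Φ.obj A, Q.map γ.hom = ⇑(s A) := by
    intro A
    rcases hind with hind | hind
    · apply hind A (Φ.obj A) (s A)
      intro ν
      refine ⟨eqToHom (hobj A).symm ≫ Φinv.map ν ≫ eqToHom htop', ?_⟩
      funext a
      have ha : a = Q.map (rep A a) x₀ := (hrep1 A a).symm
      simp only [Function.comp_apply, hs]
      conv_lhs => rw [ha]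
      rw [← FunctorToTypes.map_comp_apply, ← FunctorToTypes.map_comp_apply]
      have h2 := Functor.congr_hom hΦ2 ν
      simp only [Functor.comp_map, Functor.id_map] at h2
      rw [← hHom (rep A a ≫ eqToHom (hobj A).symm ≫ Φinv.map ν ≫ eqToHom htop')]
      simp [Functor.map_comp, eqToHom_map, h2]
    · apply hind A (Φ.obj A) (s A)
      intro ν
      refine ⟨eqToHom htop.symm ≫ Φ.map ν, ?_⟩
      funext t
      have ht : t = Q.map (rep Atop t) x₀ := (hrep1 Atop t).symm
      simp only [Function.comp_apply]
      conv_lhs => rw [ht]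
      have : Q.map ν t = Q.map (rep Atop t ≫ ν) x₀ := by
        conv_lhs => rw [ht]
        simp
      rw [this, hs, repQ]
      rw [← FunctorToTypes.map_comp_apply]
      conv_lhs => rw [← hHom (rep Atop t)]
      simp [Functor.map_comp]
  choose γ hγ using hiso
  refine ⟨NatIso.ofComponents γ ?_⟩
  intro A B f
  apply Q.map_injective
  ext a
  simp only [Functor.id_map, FunctorToTypes.map_comp_apply]
  change Q.map (f ≫ (γ B).hom) a = Q.map ((γ A).hom ≫ Φ.map f) a
  rw [FunctorToTypes.map_comp_apply, FunctorToTypes.map_comp_apply]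
  exact (congrFun (hγ B) (Q.map f a)).trans
    ((snat f a).trans (congrArg (Q.map (Φ.map f)) (congrFun (hγ A) a).symm))
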